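/- For every scoring matrix γ: edist_γ(s,t) = edist_γ(t,s) for all s,t ∈ Σ* if and only if the shortest-walk distance in D(γ) is symmetric, i.e., d_γ(a,b) = d_γ(b,a) for all a,b ∈ Σ₋ (including d_γ(a,‐) = d_γ(‐,a) for a ∈ Σ). -/

import Mathlib

open List

/-- A scoring matrix on alphabet `σ`; `none` represents the space symbol `‐`.
The value at `(none, none)` is irrelevant (never used on admissible columns). -/
abbrev Scoring (σ : Type*) := Option σ → Option σ → ℝ

/-- `A` is an alignment of the sequences `s` and `t`: a list of columns over
`Σ₋ × Σ₋` with no column `(‐,‐)`, whose first (resp. second) components with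
spaces removed spell `s` (resp. `t`). -/
def IsAlignment {σ : Type*} (A : List (Option σ × Option σ)) (s t : List σ) : Prop :=
  (∀ c ∈ A, c ≠ ((none : Option σ), (none : Option σ))) ∧
  A.filterMap Prod.fst = s ∧ A.filterMap Prod.snd = t

/-- The score of an alignment: the sum of `γ` over its columns. -/
def alignScore {σ : Type*} (γ : Scoring σ) (A : List (Option σ × Option σ)) : ℝ :=
  (A.map fun c => γ c.1 c.2).sum

/-- The weighted edit distance: minimum alignment score. -/
noncomputable def editDist {σ : Type*} (γ : Scoring σ) (s t : List σ) : ℝ :=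
  sInf {x | ∃ A, IsAlignment A s t ∧ alignScore γ A = x}

/-- The normalized edit distance: minimum normalized alignment score
(score divided by number of columns); for `s = t = ε` it is `0`. -/
noncomputable def ndist {σ : Type*} (γ : Scoring σ) (s t : List σ) : ℝ :=
  sInf {x | ∃ A, IsAlignment A s t ∧ alignScore γ A / (A.length : ℝ) = x}

/-- A walk in the digraph `D(γ)`: a list of vertices of `Σ₋` in which the
space `‐` never follows the space. -/
def IsWalkSeq {σ : Type*} (W : List (Option σ)) : Prop :=
  W.Chain' (fun a b => ¬(a = none ∧ b = none))

/-- The weight of a walk: the sum of the weights of its consecutive arcs. -/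
def walkWeight {σ : Type*} (γ : Scoring σ) (W : List (Option σ)) : ℝ :=
  ((W.zip W.tail).map fun p => γ p.1 p.2).sum

/-- `D(γ)` has a cycle of negative total weight (cycles start and end at a
vertex of `Σ`). -/
def HasNegCycle {σ : Type*} (γ : Scoring σ) : Prop :=
  ∃ (a : σ) (W : List (Option σ)),
    IsWalkSeq (some a :: (W ++ [some a])) ∧
    walkWeight γ (some a :: (W ++ [some a])) < 0

/-- The shortest-walk distance from `x` to `y` in `D(γ)`. -/
noncomputable def walkDist {σ : Type*} (γ : Scoring σ) (x y : Option σ) : ℝ :=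
  sInf {w | ∃ W : List (Option σ), IsWalkSeq W ∧ W.head? = some x ∧
    W.getLast? = some y ∧ walkWeight γ W = w}

/-- A column of an extended alignment: a nonempty sequence over `Σ₋`, with at
least one non-space symbol, no two consecutive spaces, and not having a space
at both ends. -/
def IsExtCol {σ : Type*} (c : List (Option σ)) : Prop :=
  c ≠ [] ∧ (∃ x ∈ c, x ≠ none) ∧
  c.Chain' (fun a b => ¬(a = none ∧ b = none)) ∧
  ¬(c.head? = some none ∧ c.getLast? = some none)

/-- An extended alignment of `s, t`: a list of admissible columns whose first
symbols (spaces removed) spell `s` and whose last symbols spell `t`. -/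
def IsExtAlignment {σ : Type*} (E : List (List (Option σ))) (s t : List σ) : Prop :=
  (∀ c ∈ E, IsExtCol c) ∧
  E.filterMap (fun c => c.head?.bind id) = s ∧
  E.filterMap (fun c => c.getLast?.bind id) = t

/-- The extended edit distance: minimum total score over extended alignments,
where the score of a column is the sum of `γ` over its consecutive pairs. -/
noncomputable def edist {σ : Type*} (γ : Scoring σ) (s t : List σ) : ℝ :=
  sInf {x | ∃ E, IsExtAlignment E s t ∧ (E.map (walkWeight γ)).sum = x}

/-- `f` is a premetric: `f x x = 0` and `f x y ≥ 0`. -/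
def IsPremetric {σ : Type*} (f : List σ → List σ → ℝ) : Prop :=
  (∀ s, f s s = 0) ∧ (∀ s t, 0 ≤ f s t)




section AuxStmt18

variable {σ : Type*}

/-- The set of weights of walks from `x` to `y`. -/
def WSet (γ : Scoring σ) (x y : Option σ) : Set ℝ :=
  {w | ∃ W : List (Option σ), IsWalkSeq W ∧ W.head? = some x ∧
    W.getLast? = some y ∧ walkWeight γ W = w}

lemma walkDist_eq (γ : Scoring σ) (x y : Option σ) : walkDist γ x y = sInf (WSet γ x y) := rfl

/-- The set of scores of extended alignments of `s` and `t`. -/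
def ESet (γ : Scoring σ) (s t : List σ) : Set ℝ :=
  {x | ∃ E, IsExtAlignment E s t ∧ (E.map (walkWeight γ)).sum = x}

lemma edist_eq (γ : Scoring σ) (s t : List σ) : edist γ s t = sInf (ESet γ s t) := rfl

@[simp] lemma walkWeight_nil (γ : Scoring σ) : walkWeight γ ([] : List (Option σ)) = 0 := by
  simp [walkWeight]

@[simp] lemma walkWeight_single (γ : Scoring σ) (a : Option σ) : walkWeight γ [a] = 0 := by
  simp [walkWeight]

lemma walkWeight_cons₂ (γ : Scoring σ) (a b : Option σ) (l : List (Option σ)) :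
    walkWeight γ (a :: b :: l) = γ a b + walkWeight γ (b :: l) := by
  simp [walkWeight]

lemma filterMap_cons' {α β : Type*} (f : α → Option β) (c : α) (l : List α) :
    (c :: l).filterMap f = (f c).toList ++ l.filterMap f := by
  cases h : f c <;> simp [h]

lemma glue_weight (γ : Scoring σ) :
    ∀ (W₁ : List (Option σ)) {W₂ : List (Option σ)} {v : Option σ},
      W₁.getLast? = some v → W₂.head? = some v →
      walkWeight γ (W₁ ++ W₂.tail) = walkWeight γ W₁ + walkWeight γ W₂
  | [], _, _, h, _ => by simp at h
  | [a], W₂, v, h, h2 => by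
    simp at h
    subst h
    cases W₂ with
    | nil => simp at h2
    | cons b t =>
      simp at h2
      subst h2
      simp
  | a :: b :: l, W₂, v, h, h2 => by
    have h' : (b :: l).getLast? = some v := by rwa [List.getLast?_cons_cons] at h
    have ih := glue_weight γ (b :: l) h' h2
    simp only [List.cons_append] at ih ⊢
    rw [walkWeight_cons₂, walkWeight_cons₂, ih]
    ring

lemma glue_chain {W₁ W₂ : List (Option σ)} {v : Option σ}
    (h1 : W₁.getLast? = some v) (h2 : W₂.head? = some v)
    (hc1 : IsWalkSeq W₁) (hc2 : IsWalkSeq W₂) : IsWalkSeq (W₁ ++ W₂.tail) := by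
  unfold IsWalkSeq at *
  cases W₂ with
  | nil => simp at h2
  | cons b t =>
    simp at h2; subst h2
    simp only [List.tail_cons]
    rw [List.Chain', List.isChain_cons] at hc2
    refine List.IsChain.append hc1 hc2.2 ?_
    intro x hx y hy
    rw [h1] at hx
    simp at hx
    subst hx
    exact hc2.1 y hy

lemma glue_head? {W₁ : List (Option σ)} (W₂ : List (Option σ)) (h : W₁ ≠ []) :
    (W₁ ++ W₂.tail).head? = W₁.head? := by
  cases W₁ with
  | nil => simp at h
  | cons a t => simp

lemma glue_last? {W₁ W₂ : List (Option σ)} {v : Option σ}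
    (h1 : W₁.getLast? = some v) (h2 : W₂.head? = some v) :
    (W₁ ++ W₂.tail).getLast? = W₂.getLast? := by
  cases W₂ with
  | nil => simp at h2
  | cons b t =>
    simp at h2; subst h2
    cases t with
    | nil => simpa using h1
    | cons c t' =>
      rw [List.tail_cons, List.getLast?_append_of_ne_nil _ (by simp), List.getLast?_cons_cons]

lemma WSet.glue {γ : Scoring σ} {x y z : Option σ} {w₁ w₂ : ℝ}
    (h₁ : w₁ ∈ WSet γ x y) (h₂ : w₂ ∈ WSet γ y z) : w₁ + w₂ ∈ WSet γ x z := by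
  obtain ⟨W₁, hW₁, hh₁, hl₁, rfl⟩ := h₁
  obtain ⟨W₂, hW₂, hh₂, hl₂, rfl⟩ := h₂
  have hne : W₁ ≠ [] := by rintro rfl; simp at hh₁
  exact ⟨W₁ ++ W₂.tail, glue_chain hl₁ hh₂ hW₁ hW₂, by rw [glue_head? W₂ hne, hh₁],
    by rw [glue_last? hl₁ hh₂, hl₂], (glue_weight γ W₁ hl₁ hh₂)⟩

lemma wset_nonempty (γ : Scoring σ) (x y : Option σ) : (WSet γ x y).Nonempty := by
  rcases eq_or_ne x y with rfl | h
  · exact ⟨0, [x], List.isChain_singleton x, rfl, rfl, by simp⟩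
  · refine ⟨γ x y, [x, y], ?_, rfl, rfl, by rw [walkWeight_cons₂]; simp⟩
    refine List.isChain_pair.2 ?_
    rintro ⟨rfl, rfl⟩
    exact h rfl

lemma unbdd_all {γ : Scoring σ} {x y : Option σ} (h : ¬BddBelow (WSet γ x y))
    (u v : Option σ) : ¬BddBelow (WSet γ u v) := by
  rw [not_bddBelow_iff] at h ⊢
  intro r
  obtain ⟨w₁, hw₁⟩ := wset_nonempty γ u x
  obtain ⟨w₃, hw₃⟩ := wset_nonempty γ y v
  obtain ⟨w₂, hw₂, hlt⟩ := h (r - w₁ - w₃)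
  exact ⟨w₁ + w₂ + w₃, WSet.glue (WSet.glue hw₁ hw₂) hw₃, by linarith⟩

lemma walkDist_triangle {γ : Scoring σ} {x z : Option σ} (hb : BddBelow (WSet γ x z))
    (y : Option σ) : walkDist γ x z ≤ walkDist γ x y + walkDist γ y z := by
  refine le_of_forall_pos_le_add fun ε hε => ?_
  obtain ⟨w₁, h₁, hlt₁⟩ := exists_lt_of_csInf_lt (wset_nonempty γ x y)
    (lt_add_of_pos_right (sInf (WSet γ x y)) (half_pos hε))
  obtain ⟨w₂, h₂, hlt₂⟩ := exists_lt_of_csInf_lt (wset_nonempty γ y z)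
    (lt_add_of_pos_right (sInf (WSet γ y z)) (half_pos hε))
  have hle := csInf_le hb (WSet.glue h₁ h₂)
  rw [walkDist_eq, walkDist_eq, walkDist_eq]
  linarith

lemma IsExtCol.endpoints {c : List (Option σ)} (hc : IsExtCol c) :
    ∃ h l, c.head? = some h ∧ c.getLast? = some l ∧ ¬(h = none ∧ l = none) := by
  obtain ⟨hne, -, -, h4⟩ := hc
  refine ⟨c.head hne, c.getLast hne, List.head?_eq_head hne, List.getLast?_eq_getLast hne, ?_⟩
  rintro ⟨h1, h2⟩
  exact h4 ⟨by rw [List.head?_eq_head hne, h1], by rw [List.getLast?_eq_getLast hne, h2]⟩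

lemma IsExtCol.mem_wset {γ : Scoring σ} {c : List (Option σ)} (hc : IsExtCol c)
    {h l : Option σ} (hh : c.head? = some h) (hl : c.getLast? = some l) :
    walkWeight γ c ∈ WSet γ h l := ⟨c, hc.2.2.1, hh, hl, rfl⟩

lemma walk_extCol {W : List (Option σ)} {x y : Option σ} (hW : IsWalkSeq W)
    (hh : W.head? = some x) (hl : W.getLast? = some y) (hxy : ¬(x = none ∧ y = none)) :
    IsExtCol W := by
  have hne : W ≠ [] := by rintro rfl; simp at hh
  refine ⟨hne, ?_, hW, ?_⟩
  · by_cases hx : x = none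
    · exact ⟨y, List.mem_of_getLast? hl, fun hy => hxy ⟨hx, hy⟩⟩
    · exact ⟨x, List.mem_of_mem_head? (by rw [hh]; rfl), hx⟩
  · rintro ⟨h1, h2⟩
    rw [hh] at h1
    rw [hl] at h2
    exact hxy ⟨by injection h1, by injection h2⟩

lemma exists_alignment (s t : List σ) :
    IsExtAlignment ((s.map fun a => [some a, none]) ++ (t.map fun b => [(none : Option σ), some b])) s t := by
  refine ⟨?_, ?_, ?_⟩
  · intro c hc
    rcases List.mem_append.1 hc with h | h <;> obtain ⟨a, -, rfl⟩ := List.mem_map.1 h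
    · exact ⟨by simp, ⟨some a, by simp⟩, by simp [List.Chain', List.isChain_cons_cons], by simp⟩
    · exact ⟨by simp, ⟨some a, by simp⟩, by simp [List.Chain', List.isChain_cons_cons], by simp⟩
  · simp [List.filterMap_append, List.filterMap_map, Function.comp_def]
  · simp [List.filterMap_append, List.filterMap_map, Function.comp_def]

lemma eset_nonempty (γ : Scoring σ) (s t : List σ) : (ESet γ s t).Nonempty :=
  ⟨_, _, exists_alignment s t, rfl⟩

lemma length_le_of_cols {E : List (List (Option σ))} (hcol : ∀ c ∈ E, IsExtCol c) :
    E.length ≤ (E.filterMap fun c => c.head?.bind id).length +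
      (E.filterMap fun c => c.getLast?.bind id).length := by
  induction E with
  | nil => simp
  | cons c E ih =>
    obtain ⟨h, l, hh, hl, hnn⟩ := (hcol c (by simp)).endpoints
    have ih' := ih (fun c hc => hcol c (by simp [hc]))
    have hfc : c.head?.bind id = h := by rw [hh]; rfl
    have hgc : c.getLast?.bind id = l := by rw [hl]; rfl
    rw [filterMap_cons', filterMap_cons']
    simp only [hfc, hgc, List.length_append, List.length_cons]
    match h, l, hnn with
    | none, none, hnn => exact absurd ⟨rfl, rfl⟩ hnn
    | none, some b, _ =>
      simp only [Option.toList_none, Option.toList_some, List.length_nil, List.length_cons]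
      omega
    | some a, none, _ =>
      simp only [Option.toList_none, Option.toList_some, List.length_nil, List.length_cons]
      omega
    | some a, some b, _ =>
      simp only [Option.toList_some, List.length_cons]
      omega

lemma eset_bddBelow {γ : Scoring σ} [Fintype σ] (hbdd : ∀ x y, BddBelow (WSet γ x y))
    (s t : List σ) : BddBelow (ESet γ s t) := by
  choose B hB using fun p : Option σ × Option σ => hbdd p.1 p.2
  set m : ℝ := min 0 ((Finset.univ : Finset (Option σ × Option σ)).inf'
    ⟨(none, none), Finset.mem_univ _⟩ B) with hm
  refine ⟨(s.length + t.length : ℝ) * m, ?_⟩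
  rintro w ⟨E, ⟨hcol, hs, ht⟩, rfl⟩
  have hm0 : m ≤ 0 := min_le_left _ _
  have hlen : E.length ≤ s.length + t.length := by
    have h := length_le_of_cols hcol
    rwa [hs, ht] at h
  have hcolw : ∀ r ∈ E.map (walkWeight γ), m ≤ r := by
    intro r hr
    obtain ⟨c, hc, rfl⟩ := List.mem_map.1 hr
    obtain ⟨h, l, hh, hl, -⟩ := (hcol c hc).endpoints
    have h1 := hB (h, l) ((hcol c hc).mem_wset hh hl)
    have h2 : m ≤ B (h, l) := le_trans (min_le_right _ _) (Finset.inf'_le _ (Finset.mem_univ _))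
    linarith
  have hsum := List.card_nsmul_le_sum _ m hcolw
  rw [List.length_map, nsmul_eq_mul] at hsum
  calc (s.length + t.length : ℝ) * m ≤ (E.length : ℝ) * m := by
        apply mul_le_mul_of_nonpos_right ?_ hm0
        exact_mod_cast hlen
    _ ≤ _ := hsum

lemma eset_empty (γ : Scoring σ) : ESet γ ([] : List σ) [] = {0} := by
  ext w
  constructor
  · rintro ⟨E, ⟨hcol, hs, ht⟩, rfl⟩
    have hE : E = [] := by
      cases E with
      | nil => rfl
      | cons c E' =>
        obtain ⟨h, l, hh, hl, hnn⟩ := (hcol c (by simp)).endpoints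
        have h1 := List.filterMap_eq_nil_iff.1 hs c (by simp)
        have h2 := List.filterMap_eq_nil_iff.1 ht c (by simp)
        simp only [hh, hl, Option.bind_some, id_eq] at h1 h2
        exact absurd ⟨h1, h2⟩ hnn
    subst hE
    simp
  · intro hw
    rw [Set.mem_singleton_iff] at hw
    subst hw
    exact ⟨[], ⟨by simp, rfl, rfl⟩, rfl⟩

lemma eset_single_left (γ : Scoring σ) (a : σ) : ESet γ [a] [] = WSet γ (some a) none := by
  ext w
  constructor
  · rintro ⟨E, ⟨hcol, hs, ht⟩, rfl⟩
    have hlast : ∀ c ∈ E, c.getLast? = some none := by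
      intro c hc
      obtain ⟨h, l, hh, hl, -⟩ := (hcol c hc).endpoints
      have h1 := List.filterMap_eq_nil_iff.1 ht c hc
      simp only [hl, Option.bind_some, id_eq] at h1
      rw [hl, h1]
    have hhead : ∀ c ∈ E, ∃ a', c.head? = some (some a') := by
      intro c hc
      obtain ⟨h, l, hh, hl, hnn⟩ := (hcol c hc).endpoints
      have h2 := hlast c hc
      rw [hl] at h2
      injection h2 with h2
      subst h2
      match h, hnn, hh with
      | none, hnn, _ => exact absurd ⟨rfl, rfl⟩ hnn
      | some a', _, hh => exact ⟨a', hh⟩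
    match E, hs, hcol, hlast, hhead with
    | [], hs, _, _, _ => simp at hs
    | c :: E', hs, hcol, hlast, hhead =>
      obtain ⟨a₁, hh⟩ := hhead c (by simp)
      have hfc : c.head?.bind id = some a₁ := by rw [hh]; rfl
      rw [filterMap_cons'] at hs
      simp only [hfc, Option.toList_some, List.singleton_append, List.cons.injEq] at hs
      obtain ⟨rfl, htl⟩ := hs
      have hE' : E' = [] := by
        cases E' with
        | nil => rfl
        | cons c' E'' =>
          obtain ⟨a₂, hh₂⟩ := hhead c' (by simp)
          have h3 := List.filterMap_eq_nil_iff.1 htl c' (by simp)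
          simp [hh₂] at h3
      subst hE'
      exact ⟨c, (hcol c (by simp)).2.2.1, hh, hlast c (by simp), by simp⟩
  · rintro ⟨W, hW, hh, hl, rfl⟩
    refine ⟨[W], ⟨?_, ?_, ?_⟩, by simp⟩
    · intro c hc
      rw [List.mem_singleton] at hc
      subst hc
      exact walk_extCol hW hh hl (by simp)
    · rw [filterMap_cons']
      simp [hh]
    · rw [filterMap_cons']
      simp [hl]

lemma eset_single_right (γ : Scoring σ) (a : σ) : ESet γ [] [a] = WSet γ none (some a) := by
  ext w
  constructor
  · rintro ⟨E, ⟨hcol, hs, ht⟩, rfl⟩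
    have hhead : ∀ c ∈ E, c.head? = some none := by
      intro c hc
      obtain ⟨h, l, hh, hl, -⟩ := (hcol c hc).endpoints
      have h1 := List.filterMap_eq_nil_iff.1 hs c hc
      simp only [hh, Option.bind_some, id_eq] at h1
      rw [hh, h1]
    have hlast : ∀ c ∈ E, ∃ a', c.getLast? = some (some a') := by
      intro c hc
      obtain ⟨h, l, hh, hl, hnn⟩ := (hcol c hc).endpoints
      have h2 := hhead c hc
      rw [hh] at h2
      injection h2 with h2
      subst h2
      match l, hnn, hl with
      | none, hnn, _ => exact absurd ⟨rfl, rfl⟩ hnn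
      | some a', _, hl => exact ⟨a', hl⟩
    match E, ht, hcol, hhead, hlast with
    | [], ht, _, _, _ => simp at ht
    | c :: E', ht, hcol, hhead, hlast =>
      obtain ⟨a₁, hl⟩ := hlast c (by simp)
      have hgc : c.getLast?.bind id = some a₁ := by rw [hl]; rfl
      rw [filterMap_cons'] at ht
      simp only [hgc, Option.toList_some, List.singleton_append, List.cons.injEq] at ht
      obtain ⟨rfl, htl⟩ := ht
      have hE' : E' = [] := by
        cases E' with
        | nil => rfl
        | cons c' E'' =>
          obtain ⟨a₂, hl₂⟩ := hlast c' (by simp)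
          have h3 := List.filterMap_eq_nil_iff.1 htl c' (by simp)
          simp [hl₂] at h3
      subst hE'
      exact ⟨c, (hcol c (by simp)).2.2.1, hhead c (by simp), hl, by simp⟩
  · rintro ⟨W, hW, hh, hl, rfl⟩
    refine ⟨[W], ⟨?_, ?_, ?_⟩, by simp⟩
    · intro c hc
      rw [List.mem_singleton] at hc
      subst hc
      exact walk_extCol hW hh hl (by simp)
    · rw [filterMap_cons']
      simp [hh]
    · rw [filterMap_cons']
      simp [hl]

lemma eset_unbdd_left {γ : Scoring σ} (hall : ∀ u v, ¬BddBelow (WSet γ u v))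
    (a : σ) (s' t : List σ) : ¬BddBelow (ESet γ (a :: s') t) := by
  rw [not_bddBelow_iff]
  intro r
  obtain ⟨hcol₀, hs₀, ht₀⟩ := exists_alignment s' t
  set E₀ := (s'.map fun a => [some a, none]) ++ (t.map fun b => [(none : Option σ), some b]) with hE₀
  set w₀ := (E₀.map (walkWeight γ)).sum with hw₀
  obtain ⟨w, hwmem, hwlt⟩ := not_bddBelow_iff.1 (hall (some a) none) (r - w₀)
  obtain ⟨W, hWs, hWh, hWl, rfl⟩ := hwmem
  refine ⟨walkWeight γ W + w₀, ⟨W :: E₀, ⟨?_, ?_, ?_⟩, by simp [hw₀]⟩, by linarith⟩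
  · intro c hc
    rcases List.mem_cons.1 hc with rfl | hc
    · exact walk_extCol hWs hWh hWl (by simp)
    · exact hcol₀ c hc
  · have hv : W.head?.bind id = some a := by rw [hWh]; rfl
    rw [filterMap_cons']
    simp only [hv, Option.toList_some, List.singleton_append]
    rw [hs₀]
  · have hv : W.getLast?.bind id = none := by rw [hWl]; rfl
    rw [filterMap_cons']
    simp only [hv, Option.toList_none, List.nil_append]
    rw [ht₀]

lemma eset_unbdd_right {γ : Scoring σ} (hall : ∀ u v, ¬BddBelow (WSet γ u v))
    (b : σ) (t' : List σ) : ¬BddBelow (ESet γ ([] : List σ) (b :: t')) := by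
  rw [not_bddBelow_iff]
  intro r
  obtain ⟨hcol₀, hs₀, ht₀⟩ := exists_alignment ([] : List σ) t'
  set E₀ := (([] : List σ).map fun a => [some a, none]) ++ (t'.map fun b => [(none : Option σ), some b]) with hE₀
  set w₀ := (E₀.map (walkWeight γ)).sum with hw₀
  obtain ⟨w, hwmem, hwlt⟩ := not_bddBelow_iff.1 (hall none (some b)) (r - w₀)
  obtain ⟨W, hWs, hWh, hWl, rfl⟩ := hwmem
  refine ⟨walkWeight γ W + w₀, ⟨W :: E₀, ⟨?_, ?_, ?_⟩, by simp [hw₀]⟩, by linarith⟩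
  · intro c hc
    rcases List.mem_cons.1 hc with rfl | hc
    · exact walk_extCol hWs hWh hWl (by simp)
    · exact hcol₀ c hc
  · have hv : W.head?.bind id = none := by rw [hWh]; rfl
    rw [filterMap_cons']
    simp only [hv, Option.toList_none, List.nil_append]
    rw [hs₀]
  · have hv : W.getLast?.bind id = some b := by rw [hWl]; rfl
    rw [filterMap_cons']
    simp only [hv, Option.toList_some, List.singleton_append]
    rw [ht₀]

lemma score_ge {γ : Scoring σ} (hbdd : ∀ x y, BddBelow (WSet γ x y)) (a b : σ)
    (htri : walkDist γ (some a) (some b) ≤ walkDist γ (some a) none + walkDist γ none (some b))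
    {E : List (List (Option σ))} (hE : IsExtAlignment E [a] [b]) :
    walkDist γ (some a) (some b) ≤ (E.map (walkWeight γ)).sum := by
  obtain ⟨hcol, hs, ht⟩ := hE
  have hlen : E.length ≤ 2 := by
    have h := length_le_of_cols hcol
    rw [hs, ht] at h
    simpa using h
  match E, hcol, hs, ht, hlen with
  | [], _, hs, _, _ => simp at hs
  | [c], hcol, hs, ht, _ =>
    obtain ⟨h, l, hh, hl, hnn⟩ := (hcol c (by simp)).endpoints
    have hfc : c.head?.bind id = h := by rw [hh]; rfl
    have hgc : c.getLast?.bind id = l := by rw [hl]; rfl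
    rw [filterMap_cons'] at hs ht
    simp only [hfc, List.filterMap_nil, List.append_nil] at hs
    simp only [hgc, List.filterMap_nil, List.append_nil] at ht
    match h, hh, hs with
    | none, _, hs => simp at hs
    | some a', hh, hs =>
      simp only [Option.toList_some, List.cons.injEq] at hs
      obtain ⟨rfl, -⟩ := hs
      match l, hl, ht with
      | none, _, ht => simp at ht
      | some b', hl, ht =>
        simp only [Option.toList_some, List.cons.injEq] at ht
        obtain ⟨rfl, -⟩ := ht
        have hle := csInf_le (hbdd (some a') (some b')) ((hcol c (by simp)).mem_wset hh hl)
        rw [walkDist_eq]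
        simpa using hle
  | [c₁, c₂], hcol, hs, ht, _ =>
    obtain ⟨h₁, l₁, hh₁, hl₁, hnn₁⟩ := (hcol c₁ (by simp)).endpoints
    obtain ⟨h₂, l₂, hh₂, hl₂, hnn₂⟩ := (hcol c₂ (by simp)).endpoints
    have hfc₁ : c₁.head?.bind id = h₁ := by rw [hh₁]; rfl
    have hgc₁ : c₁.getLast?.bind id = l₁ := by rw [hl₁]; rfl
    have hfc₂ : c₂.head?.bind id = h₂ := by rw [hh₂]; rfl
    have hgc₂ : c₂.getLast?.bind id = l₂ := by rw [hl₂]; rfl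
    rw [filterMap_cons', filterMap_cons'] at hs ht
    simp only [hfc₁, hfc₂, List.filterMap_nil, List.append_nil] at hs
    simp only [hgc₁, hgc₂, List.filterMap_nil, List.append_nil] at ht
    have hsum : (List.map (walkWeight γ) [c₁, c₂]).sum = walkWeight γ c₁ + walkWeight γ c₂ := by
      simp
    rw [hsum]
    match h₁, h₂, hh₁, hh₂, hnn₁, hnn₂, hs with
    | none, none, _, _, hnn₁, hnn₂, hs => simp at hs
    | none, some a₂, hh₁, hh₂, hnn₁, _, hs =>
      simp only [Option.toList_none, Option.toList_some, List.nil_append, List.cons.injEq] at hs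
      obtain ⟨rfl, -⟩ := hs
      match l₁, hnn₁, hl₁ with
      | none, hnn₁, _ => exact absurd ⟨rfl, rfl⟩ hnn₁
      | some b₁, _, hl₁ =>
        match l₂, hl₂, ht with
        | none, hl₂, ht =>
          simp only [Option.toList_some, Option.toList_none, List.append_nil, List.cons.injEq] at ht
          obtain ⟨rfl, -⟩ := ht
          have k₁ := csInf_le (hbdd _ _) ((hcol c₁ (by simp)).mem_wset hh₁ hl₁)
          have k₂ := csInf_le (hbdd _ _) ((hcol c₂ (by simp)).mem_wset hh₂ hl₂)
          rw [walkDist_eq, walkDist_eq, walkDist_eq] at htri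
          rw [walkDist_eq]
          linarith
        | some b₂, _, ht =>
          simp only [Option.toList_some, Option.toList_some] at ht
          simp at ht
    | some a₁, none, hh₁, hh₂, _, hnn₂, hs =>
      simp only [Option.toList_some, Option.toList_none, List.append_nil, List.cons.injEq] at hs
      obtain ⟨rfl, -⟩ := hs
      match l₂, hnn₂, hl₂ with
      | none, hnn₂, _ => exact absurd ⟨rfl, rfl⟩ hnn₂
      | some b₂, _, hl₂ =>
        match l₁, hl₁, ht with
        | none, hl₁, ht =>
          simp only [Option.toList_none, Option.toList_some, List.nil_append, List.cons.injEq] at ht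
          obtain ⟨rfl, -⟩ := ht
          have k₁ := csInf_le (hbdd _ _) ((hcol c₁ (by simp)).mem_wset hh₁ hl₁)
          have k₂ := csInf_le (hbdd _ _) ((hcol c₂ (by simp)).mem_wset hh₂ hl₂)
          rw [walkDist_eq, walkDist_eq, walkDist_eq] at htri
          rw [walkDist_eq]
          linarith
        | some b₁, _, ht => simp at ht
    | some a₁, some a₂, _, _, _, _, hs => simp at hs
  | c₁ :: c₂ :: c₃ :: E', _, _, _, hlen =>
    have h := hlen
    simp only [List.length_cons] at h
    omega

lemma flip_construct {γ : Scoring σ} (hsym : ∀ a b, walkDist γ a b = walkDist γ b a)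
    (hbdd : ∀ x y, BddBelow (WSet γ x y)) {δ : ℝ} (hδ : 0 < δ) :
    ∀ E : List (List (Option σ)), (∀ c ∈ E, IsExtCol c) →
    ∃ E' : List (List (Option σ)), (∀ c ∈ E', IsExtCol c) ∧
      (E'.filterMap fun c => c.head?.bind id) = (E.filterMap fun c => c.getLast?.bind id) ∧
      (E'.filterMap fun c => c.getLast?.bind id) = (E.filterMap fun c => c.head?.bind id) ∧
      (E'.map (walkWeight γ)).sum ≤ (E.map (walkWeight γ)).sum + E.length * δ
  | [], _ => ⟨[], fun c hc => absurd hc List.not_mem_nil, by simp, by simp, by simp⟩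
  | c :: E, hcol => by
    obtain ⟨E', h1, h2, h3, h4⟩ := flip_construct hsym hbdd hδ E
      (fun c' hc' => hcol c' (List.mem_cons_of_mem _ hc'))
    obtain ⟨h, l, hh, hl, hnn⟩ := (hcol c (List.mem_cons_self)).endpoints
    have hd : walkDist γ l h ≤ walkWeight γ c := by
      rw [hsym, walkDist_eq]
      exact csInf_le (hbdd h l) ((hcol c (List.mem_cons_self)).mem_wset hh hl)
    obtain ⟨w, hwmem, hwlt⟩ := exists_lt_of_csInf_lt (wset_nonempty γ l h)
      (lt_add_of_pos_right (sInf (WSet γ l h)) hδ)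
    obtain ⟨W, hWs, hWh, hWl, rfl⟩ := hwmem
    rw [← walkDist_eq] at hwlt
    refine ⟨W :: E', ?_, ?_, ?_, ?_⟩
    · intro c' hc'
      rcases List.mem_cons.1 hc' with rfl | hc'
      · exact walk_extCol hWs hWh hWl (fun hp => hnn ⟨hp.2, hp.1⟩)
      · exact h1 c' hc'
    · rw [filterMap_cons', filterMap_cons']
      simp only [hWh, hl]
      rw [h2]
    · rw [filterMap_cons', filterMap_cons']
      simp only [hWl, hh]
      rw [h3]
    · simp only [List.map_cons, List.sum_cons, List.length_cons]
      have harith : ((E.length : ℝ) + 1) * δ = (E.length : ℝ) * δ + δ := by ring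
      push_cast
      linarith

end AuxStmt18


theorem stmt18 {σ : Type*} [Fintype σ] (γ : Scoring σ) :
    (∀ s t : List σ, edist γ s t = edist γ t s) ↔
      (∀ a b : Option σ, walkDist γ a b = walkDist γ b a) := by
  by_cases hbdd : ∀ x y : Option σ, BddBelow (WSet γ x y)
  · constructor
    · intro hsym
      have hspace : ∀ a : σ, walkDist γ (some a) none = walkDist γ none (some a) := by
        intro a
        have h1 : edist γ [a] [] = walkDist γ (some a) none := by
          rw [edist_eq, walkDist_eq, eset_single_left]
        have h2 : edist γ [] [a] = walkDist γ none (some a) := by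
          rw [edist_eq, walkDist_eq, eset_single_right]
        rw [← h1, ← h2, hsym]
      have hedist : ∀ a b : σ, edist γ [a] [b] = walkDist γ (some a) (some b) := by
        intro a b
        have htri : walkDist γ (some a) (some b) ≤
            walkDist γ (some a) none + walkDist γ none (some b) :=
          walkDist_triangle (hbdd _ _) none
        apply _root_.le_antisymm
        · rw [edist_eq, walkDist_eq]
          refine le_csInf (wset_nonempty γ _ _) fun w hw => ?_
          obtain ⟨W, hWs, hh, hl, rfl⟩ := hw
          refine csInf_le (eset_bddBelow hbdd _ _) ⟨[W], ⟨?_, ?_, ?_⟩, by simp⟩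
          · intro c hc
            rw [List.mem_singleton] at hc
            subst hc
            exact walk_extCol hWs hh hl (by simp)
          · rw [filterMap_cons']
            simp [hh]
          · rw [filterMap_cons']
            simp [hl]
        · rw [edist_eq]
          refine le_csInf (eset_nonempty γ _ _) ?_
          rintro w ⟨E, hE, rfl⟩
          exact score_ge hbdd a b htri hE
      intro x y
      match x, y with
      | none, none => rfl
      | some a, none => exact hspace a
      | none, some a => exact (hspace a).symm
      | some a, some b => rw [← hedist a b, ← hedist b a, hsym]
    · intro hsym
      have key : ∀ s t : List σ, edist γ t s ≤ edist γ s t := by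
        intro s t
        rw [edist_eq γ s t]
        refine le_csInf (eset_nonempty γ s t) ?_
        rintro w ⟨E, ⟨hcol, hs, ht⟩, rfl⟩
        refine le_of_forall_pos_le_add fun ε hε => ?_
        have hpos : (0:ℝ) < (E.length : ℝ) + 1 := by positivity
        have hδ : 0 < ε / ((E.length : ℝ) + 1) := by positivity
        obtain ⟨E', hcol', hh', hl', hsc⟩ := flip_construct hsym hbdd hδ E hcol
        have hmem : ((E'.map (walkWeight γ)).sum) ∈ ESet γ t s :=
          ⟨E', ⟨hcol', by rw [hh', ht], by rw [hl', hs]⟩, rfl⟩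
        have h1 := csInf_le (eset_bddBelow hbdd t s) hmem
        have h3 : ((E.length : ℝ) + 1) * (ε / ((E.length : ℝ) + 1)) = ε := by
          field_simp
        have h5 : ((E.length : ℝ) + 1) * (ε / ((E.length : ℝ) + 1)) =
            (E.length : ℝ) * (ε / ((E.length : ℝ) + 1)) + (ε / ((E.length : ℝ) + 1)) := by
          ring
        rw [edist_eq]
        linarith
      intro s t
      exact _root_.le_antisymm (key t s) (key s t)
  · push_neg at hbdd
    obtain ⟨x, y, hxy⟩ := hbdd
    have hall : ∀ u v, ¬BddBelow (WSet γ u v) := unbdd_all hxy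
    have hwd : ∀ u v, walkDist γ u v = 0 := fun u v => by
      rw [walkDist_eq]
      exact Real.sInf_of_not_bddBelow (hall u v)
    have hed : ∀ s t : List σ, edist γ s t = 0 := by
      intro s t
      match s, t with
      | [], [] => rw [edist_eq, eset_empty, csInf_singleton]
      | a :: s', t =>
        rw [edist_eq]
        exact Real.sInf_of_not_bddBelow (eset_unbdd_left hall a s' t)
      | [], b :: t' =>
        rw [edist_eq]
        exact Real.sInf_of_not_bddBelow (eset_unbdd_right hall b t')
    exact iff_of_true (fun s t => by rw [hed, hed]) (fun a b => by rw [hwd, hwd])
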